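/- Let q ∈ (−1,0) and let u ∈ ℂ with |u| = 1. There exist (unique) bounded linear operators α and γ on ℓ²(ℕ) satisfying α e_k = √(1−q^{2k}) e_{k−1} and γ e_k = u q^k e_k for all k ∈ ℕ. Their adjoints satisfy α* e_k = √(1−q^{2k+2}) e_{k+1} and γ* e_k = u⁻¹ q^k e_k, and the relations αγ = qγα, αγ* = qγ*α, γγ* = γ*γ, α*α + γ*γ = 1, and αα* + q²γγ* = 1 hold. -/

import Mathlib

open ContinuousLinearMap

/-- `ℓ²(ℕ)`: square-summable complex sequences. -/
noncomputable def ell2 : Type := lp (fun _ : ℕ => ℂ) 2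

noncomputable instance : NormedAddCommGroup ell2 := by unfold ell2; infer_instance
noncomputable instance : InnerProductSpace ℂ ell2 := by unfold ell2; infer_instance
instance : CompleteSpace ell2 := by unfold ell2; infer_instance

/-- The standard orthonormal basis vector `e_k` of `ℓ²(ℕ)`. -/
noncomputable def eb (k : ℕ) : ell2 := (lp.single 2 k (1 : ℂ) : lp (fun _ : ℕ => ℂ) 2)


namespace S11

local notation "L" => lp (fun _ : ℕ => ℂ) 2

noncomputable def e (k : ℕ) : L := lp.single 2 k (1 : ℂ)

lemma e_apply (k j : ℕ) : (e k : ℕ → ℂ) j = if j = k then 1 else 0 := by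
  rw [e, lp.single_apply]
  split_ifs with h
  · subst h; simp
  · simp [h]

lemma inner_e (j k : ℕ) : (inner ℂ (e j) (e k) : ℂ) = if j = k then 1 else 0 := by
  rw [e, lp.inner_single_left]
  simp only [RCLike.inner_apply, map_one, mul_one]
  exact e_apply k j

lemma mem_aux (w : ℕ → ℂ) (g : ℕ → ℕ) (hw : ∀ n, ‖w n‖ ≤ 1) (hg : Function.Injective g)
    (f : L) : Memℓp (fun n => w n * f (g n)) 2 := by
  apply memℓp_gen
  have h1 : Summable ((fun i => ‖f i‖ ^ ENNReal.toReal 2) ∘ g) :=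
    ((lp.memℓp f).summable (by norm_num)).comp_injective hg
  refine h1.of_nonneg_of_le (fun n => ?_) (fun n => ?_)
  · positivity
  · simp only [Function.comp_apply]
    apply Real.rpow_le_rpow (norm_nonneg _) _ (by norm_num)
    rw [norm_mul]
    calc ‖w n‖ * ‖f (g n)‖ ≤ 1 * ‖f (g n)‖ := by
          exact mul_le_mul_of_nonneg_right (hw n) (norm_nonneg _)
      _ = ‖f (g n)‖ := one_mul _

noncomputable def op (w : ℕ → ℂ) (g : ℕ → ℕ) (hw : ∀ n, ‖w n‖ ≤ 1)
    (hg : Function.Injective g) : L →L[ℂ] L :=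
  LinearMap.mkContinuous
    { toFun := fun f => (⟨fun n => w n * f (g n), mem_aux w g hw hg f⟩ : L)
      map_add' := fun x y => by
        apply lp.ext
        funext n
        simp only [lp.coeFn_add, Pi.add_apply]
        show w n * (x + y) (g n) = w n * x (g n) + w n * y (g n)
        rw [lp.coeFn_add]
        simp [mul_add]
      map_smul' := fun c x => by
        apply lp.ext
        funext n
        simp only [lp.coeFn_smul, Pi.smul_apply, RingHom.id_apply]
        show w n * (c • x) (g n) = c • (w n * x (g n))
        rw [lp.coeFn_smul]
        simp [smul_eq_mul]
        ring }
    1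
    (fun f => by
      rw [one_mul]
      apply lp.norm_le_of_forall_sum_le (by norm_num) (norm_nonneg f)
      intro s
      calc ∑ i ∈ s, ‖w i * f (g i)‖ ^ ENNReal.toReal 2
          ≤ ∑ i ∈ s, ‖f (g i)‖ ^ ENNReal.toReal 2 := by
            apply Finset.sum_le_sum
            intro i _
            apply Real.rpow_le_rpow (norm_nonneg _) _ (by norm_num)
            rw [norm_mul]
            calc ‖w i‖ * ‖f (g i)‖ ≤ 1 * ‖f (g i)‖ :=
                  mul_le_mul_of_nonneg_right (hw i) (norm_nonneg _)
              _ = ‖f (g i)‖ := one_mul _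
        _ = ∑ j ∈ s.image g, ‖f j‖ ^ ENNReal.toReal 2 := by
            rw [Finset.sum_image (fun a _ b _ h => hg h)]
        _ ≤ ‖f‖ ^ ENNReal.toReal 2 := lp.sum_rpow_le_norm_rpow (by norm_num) f _)

lemma op_apply (w : ℕ → ℂ) (g : ℕ → ℕ) (hw : ∀ n, ‖w n‖ ≤ 1) (hg : Function.Injective g)
    (f : L) (n : ℕ) : (op w g hw hg f : ℕ → ℂ) n = w n * f (g n) := rfl

lemma op_single (w : ℕ → ℂ) (g : ℕ → ℕ) (hw : ∀ n, ‖w n‖ ≤ 1) (hg : Function.Injective g)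
    (k n : ℕ) : (op w g hw hg (e k) : ℕ → ℂ) n = if g n = k then w n else 0 := by
  rw [op_apply, e_apply]
  split_ifs <;> simp

lemma ext_op {A B : L →L[ℂ] L} (h : ∀ k, A (e k) = B (e k)) : A = B := by
  refine ContinuousLinearMap.ext_on
    (Submodule.dense_iff_topologicalClosure_eq_top.mpr
      (default : HilbertBasis ℕ ℂ L).dense_span) ?_
  rintro x ⟨k, rfl⟩
  rw [← (default : HilbertBasis ℕ ℂ L).repr_symm_single k]
  have h2 : (default : HilbertBasis ℕ ℂ L).repr.symm (lp.single 2 k 1) = e k := rfl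
  rw [h2]
  exact h k

lemma ext_vec {x y : L} (h : ∀ j, (inner ℂ (e j) x : ℂ) = inner ℂ (e j) y) : x = y := by
  apply lp.ext
  funext j
  have := h j
  rwa [e, lp.inner_single_left, lp.inner_single_left, RCLike.inner_apply, RCLike.inner_apply,
    map_one, mul_one, mul_one] at this


theorem main (q : ℝ) (hq : q ∈ Set.Ioo (-1 : ℝ) 0) (u : ℂ) (hu : ‖u‖ = 1) :
    (∃! α : L →L[ℂ] L, ∀ k : ℕ,
        α (e k) = ((Real.sqrt (1 - q ^ (2 * k)) : ℝ) : ℂ) • e (k - 1)) ∧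
    (∃! γ : L →L[ℂ] L, ∀ k : ℕ, γ (e k) = (u * (q : ℂ) ^ k) • e k) ∧
    (∀ α γ : L →L[ℂ] L,
      (∀ k : ℕ, α (e k) = ((Real.sqrt (1 - q ^ (2 * k)) : ℝ) : ℂ) • e (k - 1)) →
      (∀ k : ℕ, γ (e k) = (u * (q : ℂ) ^ k) • e k) →
      (∀ k : ℕ, ContinuousLinearMap.adjoint α (e k)
          = ((Real.sqrt (1 - q ^ (2 * k + 2)) : ℝ) : ℂ) • e (k + 1)) ∧
      (∀ k : ℕ, ContinuousLinearMap.adjoint γ (e k) = (u⁻¹ * (q : ℂ) ^ k) • e k) ∧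
      α * γ = (q : ℂ) • (γ * α) ∧
      α * ContinuousLinearMap.adjoint γ = (q : ℂ) • (ContinuousLinearMap.adjoint γ * α) ∧
      γ * ContinuousLinearMap.adjoint γ = ContinuousLinearMap.adjoint γ * γ ∧
      ContinuousLinearMap.adjoint α * α + ContinuousLinearMap.adjoint γ * γ = 1 ∧
      α * ContinuousLinearMap.adjoint α
        + ((q : ℂ) ^ 2) • (γ * ContinuousLinearMap.adjoint γ) = 1) := by
  obtain ⟨hq1, hq2⟩ := hq
  have habs : |q| < 1 := abs_lt.mpr ⟨hq1, hq2.trans one_pos⟩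
  have hu0 : u ≠ 0 := by
    intro h; rw [h, norm_zero] at hu; norm_num at hu
  have hpownn : ∀ k : ℕ, 0 ≤ q ^ (2 * k) := fun k => by
    rw [pow_mul]; exact pow_nonneg (sq_nonneg q) _
  have key : ∀ k : ℕ, 0 ≤ 1 - q ^ (2 * k) := by
    intro k
    have h1 : q ^ (2 * k) ≤ 1 := by
      rw [pow_mul]
      exact pow_le_one₀ (sq_nonneg q) (by nlinarith)
    linarith
  have key' : ∀ k : ℕ, 0 ≤ 1 - q ^ (2 * k + 2) := fun k => by
    have := key (k + 1); rwa [show 2 * (k + 1) = 2 * k + 2 by ring] at this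
  have hwγ : ∀ n : ℕ, ‖u * (q : ℂ) ^ n‖ ≤ 1 := by
    intro n
    rw [norm_mul, hu, one_mul, norm_pow, Complex.norm_real]
    exact pow_le_one₀ (abs_nonneg q) habs.le
  have hwα : ∀ n : ℕ, ‖((Real.sqrt (1 - q ^ (2 * (n + 1))) : ℝ) : ℂ)‖ ≤ 1 := by
    intro n
    rw [Complex.norm_real, Real.norm_eq_abs, abs_of_nonneg (Real.sqrt_nonneg _)]
    exact Real.sqrt_le_one.mpr (by have := hpownn (n + 1); linarith)
  set γ₀ : L →L[ℂ] L := op (fun n => u * (q : ℂ) ^ n) id hwγ Function.injective_id with hγ₀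
  set α₀ : L →L[ℂ] L :=
    op (fun n => ((Real.sqrt (1 - q ^ (2 * (n + 1))) : ℝ) : ℂ)) Nat.succ hwα
      Nat.succ_injective with hα₀
  have hγs : ∀ k : ℕ, γ₀ (e k) = (u * (q : ℂ) ^ k) • e k := by
    intro k
    apply lp.ext
    funext n
    rw [hγ₀, op_single, lp.coeFn_smul, Pi.smul_apply, smul_eq_mul, e_apply]
    by_cases h : n = k
    · subst h; simp
    · simp [h]
  have hαs : ∀ k : ℕ,
      α₀ (e k) = ((Real.sqrt (1 - q ^ (2 * k)) : ℝ) : ℂ) • e (k - 1) := by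
    intro k
    apply lp.ext
    funext n
    rw [hα₀, op_single, lp.coeFn_smul, Pi.smul_apply, smul_eq_mul, e_apply]
    rcases k with _ | m
    · simp
    · simp only [Nat.succ_eq_add_one, Nat.add_sub_cancel]
      by_cases h : n = m
      · subst h; simp
      · have h' : ¬ (n + 1 = m + 1) := by omega
        simp [h, h']
  refine ⟨⟨α₀, hαs, fun β hβ => ext_op fun k => (hβ k).trans (hαs k).symm⟩,
    ⟨γ₀, hγs, fun β hβ => ext_op fun k => (hβ k).trans (hγs k).symm⟩, ?_⟩
  intro α γ hα hγ
  have hαadj : ∀ k : ℕ, ContinuousLinearMap.adjoint α (e k)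
      = ((Real.sqrt (1 - q ^ (2 * k + 2)) : ℝ) : ℂ) • e (k + 1) := by
    intro k
    apply ext_vec
    intro j
    rw [ContinuousLinearMap.adjoint_inner_right, hα j, inner_smul_left, inner_smul_right,
      inner_e, inner_e, Complex.conj_ofReal]
    rcases j with _ | m
    · simp
    · simp only [Nat.succ_eq_add_one, Nat.add_sub_cancel]
      by_cases h : m = k
      · subst h
        rw [show 2 * (m + 1) = 2 * m + 2 by ring]
        simp
      · have h' : ¬ (m + 1 = k + 1) := by omega
        simp [h, h']
  have hγadj : ∀ k : ℕ, ContinuousLinearMap.adjoint γ (e k)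
      = (u⁻¹ * (q : ℂ) ^ k) • e k := by
    intro k
    apply ext_vec
    intro j
    rw [ContinuousLinearMap.adjoint_inner_right, hγ j, inner_smul_left, inner_smul_right,
      inner_e]
    by_cases h : j = k
    · subst h
      rw [map_mul, ← Complex.inv_eq_conj hu]
      simp [Complex.conj_ofReal, map_pow]
    · simp [h]
  refine ⟨hαadj, hγadj, ?_, ?_, ?_, ?_, ?_⟩
  · apply ext_op
    intro k
    simp only [ContinuousLinearMap.mul_apply, ContinuousLinearMap.smul_apply, hγ, hα,
      map_smul, smul_smul]
    congr 1
    rcases k with _ | m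
    · simp
    · simp only [Nat.succ_eq_add_one, Nat.add_sub_cancel]
      ring
  · apply ext_op
    intro k
    simp only [ContinuousLinearMap.mul_apply, ContinuousLinearMap.smul_apply, hγadj, hα,
      map_smul, smul_smul]
    congr 1
    rcases k with _ | m
    · simp
    · simp only [Nat.succ_eq_add_one, Nat.add_sub_cancel]
      ring
  · apply ext_op
    intro k
    simp only [ContinuousLinearMap.mul_apply, hγadj, hγ, map_smul, smul_smul]
    congr 1
    ring
  · apply ext_op
    intro k
    simp only [ContinuousLinearMap.add_apply, ContinuousLinearMap.mul_apply,
      ContinuousLinearMap.one_apply, hα, hγ, map_smul, hαadj, hγadj, smul_smul]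
    rcases k with _ | m
    · simp only [Nat.zero_sub, Nat.zero_add, zero_add]
      rw [show (2 * 0 : ℕ) = 0 by ring]
      simp [mul_inv_cancel₀ hu0]
    · simp only [Nat.succ_eq_add_one, Nat.add_sub_cancel]
      rw [← add_smul]
      have h2 : (2 * (m + 1) : ℕ) = 2 * m + 2 := by ring
      rw [h2, ← Complex.ofReal_mul, Real.mul_self_sqrt (by have := key' m; linarith)]
      have hscal : ((1 - q ^ (2 * m + 2) : ℝ) : ℂ)
          + u * (q : ℂ) ^ (m + 1) * (u⁻¹ * (q : ℂ) ^ (m + 1)) = 1 := by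
        have huu : u * u⁻¹ = 1 := mul_inv_cancel₀ hu0
        push_cast
        calc (1 : ℂ) - (q : ℂ) ^ (2 * m + 2)
              + u * (q : ℂ) ^ (m + 1) * (u⁻¹ * (q : ℂ) ^ (m + 1))
            = 1 - (q : ℂ) ^ (2 * m + 2) + (u * u⁻¹) * ((q : ℂ) ^ (m + 1) * (q : ℂ) ^ (m + 1)) :=
              by ring
          _ = 1 := by rw [huu, one_mul, ← pow_add, show (m + 1) + (m + 1) = 2 * m + 2 by ring]
                      ring
      rw [hscal, one_smul]
  · apply ext_op
    intro k
    simp only [ContinuousLinearMap.add_apply, ContinuousLinearMap.mul_apply,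
      ContinuousLinearMap.smul_apply, ContinuousLinearMap.one_apply, hαadj, hα, hγadj, hγ,
      map_smul, smul_smul]
    simp only [Nat.add_sub_cancel]
    rw [← add_smul]
    have h2 : (2 * (k + 1) : ℕ) = 2 * k + 2 := by ring
    rw [h2, ← Complex.ofReal_mul, Real.mul_self_sqrt (by have := key' k; linarith)]
    have huu : u⁻¹ * u = 1 := inv_mul_cancel₀ hu0
    have hscal : ((1 - q ^ (2 * k + 2) : ℝ) : ℂ)
        + (q : ℂ) ^ 2 * (u⁻¹ * (q : ℂ) ^ k * (u * (q : ℂ) ^ k)) = 1 := by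
      push_cast
      calc (1 : ℂ) - (q : ℂ) ^ (2 * k + 2)
            + (q : ℂ) ^ 2 * (u⁻¹ * (q : ℂ) ^ k * (u * (q : ℂ) ^ k))
          = 1 - (q : ℂ) ^ (2 * k + 2) + (u⁻¹ * u) * ((q : ℂ) ^ (k + k + 2)) := by
            rw [show (k + k + 2) = k + k + 2 from rfl]
            ring
        _ = 1 := by rw [huu, one_mul, show (k + k + 2) = 2 * k + 2 by ring]; ring
    rw [hscal, one_smul]

end S11


set_option maxHeartbeats 4000000 in
/-- Woronowicz's representation of `C(SU_q(2))`: existence and uniqueness of the bounded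
operators `α, γ`, the formulas for their adjoints, and the defining relations. (When `k = 0`
the coefficient `√(1-q⁰) = 0`, so the natural-subtraction index `e_{k-1}` is harmless.) -/
theorem stmt11 (q : ℝ) (hq : q ∈ Set.Ioo (-1 : ℝ) 0) (u : ℂ) (hu : ‖u‖ = 1) :
    (∃! α : ell2 →L[ℂ] ell2, ∀ k : ℕ,
        α (eb k) = ((Real.sqrt (1 - q ^ (2 * k)) : ℝ) : ℂ) • eb (k - 1)) ∧
    (∃! γ : ell2 →L[ℂ] ell2, ∀ k : ℕ, γ (eb k) = (u * (q : ℂ) ^ k) • eb k) ∧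
    (∀ α γ : ell2 →L[ℂ] ell2,
      (∀ k : ℕ, α (eb k) = ((Real.sqrt (1 - q ^ (2 * k)) : ℝ) : ℂ) • eb (k - 1)) →
      (∀ k : ℕ, γ (eb k) = (u * (q : ℂ) ^ k) • eb k) →
      (∀ k : ℕ, adjoint α (eb k) = ((Real.sqrt (1 - q ^ (2 * k + 2)) : ℝ) : ℂ) • eb (k + 1)) ∧
      (∀ k : ℕ, adjoint γ (eb k) = (u⁻¹ * (q : ℂ) ^ k) • eb k) ∧
      α * γ = (q : ℂ) • (γ * α) ∧
      α * adjoint γ = (q : ℂ) • (adjoint γ * α) ∧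
      γ * adjoint γ = adjoint γ * γ ∧
      adjoint α * α + adjoint γ * γ = 1 ∧
      α * adjoint α + ((q : ℂ) ^ 2) • (γ * adjoint γ) = 1) := by
  exact S11.main q hq u hu
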